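/- arXiv:1403.7721 — 3 statements merged into one kernel-verified Lean document; each statement's English description precedes it below -/
import Mathlib

section
/- Let S be a random subset of a finite set V such that for a fixed element u ∈ V, the collection of events {u' ∈ S} for u' ≠ u is jointly independent of the event {u ∈ S}. Let s be an element of S chosen uniformly at random (undefined when S is empty). Then P[u = s] ≥ P[u ∈ S] / (E[|S|] + 1). -/
open Finset

/-- Lemma 1 (paper): for a random subset `S` of a finite set `V` (finite sample
space `Ω` with weights `p`), if the events `{u' ∈ S}` for `u' ≠ u` are jointly
independent of `{u ∈ S}`, and `s` is a uniformly random element of `S`, then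
`P[u = s] ≥ P[u ∈ S] / (E[|S|] + 1)`. -/
theorem stmt0 {Ω V : Type*} [Fintype Ω] [Fintype V] [DecidableEq V]
    (p : Ω → ℝ) (hp : ∀ ω, 0 ≤ p ω) (hsum : ∑ ω, p ω = 1)
    (S : Ω → Finset V) (u : V)
    (hindep : ∀ A : Finset V, u ∉ A →
      (∑ ω, if S ω \ {u} = A ∧ u ∈ S ω then p ω else 0) =
      (∑ ω, if S ω \ {u} = A then p ω else 0) * (∑ ω, if u ∈ S ω then p ω else 0)) :
    (∑ ω, if u ∈ S ω then p ω / ((S ω).card : ℝ) else 0) ≥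
      (∑ ω, if u ∈ S ω then p ω else 0) / ((∑ ω, p ω * ((S ω).card : ℝ)) + 1) := by
  classical
  set F : Finset (Finset V) := (Finset.univ \ {u}).powerset with hF
  have hmemF : ∀ ω, S ω \ {u} ∈ F := fun ω => by
    rw [hF, Finset.mem_powerset]
    exact Finset.sdiff_subset_sdiff (Finset.subset_univ _) le_rfl
  have huA : ∀ A ∈ F, u ∉ A := by
    intro A hA hu
    rw [hF, Finset.mem_powerset] at hA
    have := hA hu
    simp at this
  have swap : ∀ t : Ω → ℝ,
      ∑ A ∈ F, ∑ ω, (if S ω \ {u} = A then t ω else 0) = ∑ ω, t ω := by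
    intro t
    rw [Finset.sum_comm]
    refine Finset.sum_congr rfl fun ω _ => ?_
    rw [Finset.sum_ite_eq]
    simp [hmemF ω]
  set f : Finset V → ℝ := fun A => ∑ ω, if S ω \ {u} = A then p ω else 0 with hf
  set q : ℝ := ∑ ω, if u ∈ S ω then p ω else 0 with hq
  set x : Finset V → ℝ := fun A => (A.card : ℝ) + 1 with hx
  have hx0 : ∀ A, 0 < x A := fun A => by positivity
  have hf0 : ∀ A, 0 ≤ f A := fun A =>
    Finset.sum_nonneg fun ω _ => by split <;> simp [hp ω]
  have hq0 : 0 ≤ q := Finset.sum_nonneg fun ω _ => by split <;> simp [hp ω]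
  have hcard : ∀ ω, u ∈ S ω → ((S ω).card : ℝ) = x (S ω \ {u}) := by
    intro ω hu
    have h1 : (S ω \ {u}).card + 1 = (S ω).card := by
      rw [Finset.sdiff_singleton_eq_erase]
      exact Finset.card_erase_add_one hu
    show ((S ω).card : ℝ) = ((S ω \ {u}).card : ℝ) + 1
    rw [← h1]; push_cast; ring
  -- Rewrite the LHS as q * ∑ A ∈ F, f A / x A
  have hLHS : (∑ ω, if u ∈ S ω then p ω / ((S ω).card : ℝ) else 0)
      = q * ∑ A ∈ F, f A / x A := by
    have h1 : ∀ A ∈ F,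
        (∑ ω, if S ω \ {u} = A then (if u ∈ S ω then p ω / ((S ω).card : ℝ) else 0) else 0)
        = (∑ ω, if S ω \ {u} = A ∧ u ∈ S ω then p ω else 0) / x A := by
      intro A _
      rw [Finset.sum_div]
      refine Finset.sum_congr rfl fun ω _ => ?_
      by_cases h : S ω \ {u} = A
      · by_cases h2 : u ∈ S ω
        · rw [hcard ω h2, h]
          simp [h, h2]
        · simp [h, h2]
      · simp [h]
    calc (∑ ω, if u ∈ S ω then p ω / ((S ω).card : ℝ) else 0)
        = ∑ A ∈ F, ∑ ω, (if S ω \ {u} = A then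
            (if u ∈ S ω then p ω / ((S ω).card : ℝ) else 0) else 0) := (swap _).symm
      _ = ∑ A ∈ F, (∑ ω, if S ω \ {u} = A ∧ u ∈ S ω then p ω else 0) / x A :=
          Finset.sum_congr rfl h1
      _ = ∑ A ∈ F, (f A * q) / x A := by
          refine Finset.sum_congr rfl fun A hA => ?_
          rw [hindep A (huA A hA)]
      _ = q * ∑ A ∈ F, f A / x A := by
          rw [Finset.mul_sum]
          exact Finset.sum_congr rfl fun A _ => by ring
  have hfsum : ∑ A ∈ F, f A = 1 := (swap p).trans hsum
  set E1 : ℝ := (∑ ω, p ω * ((S ω).card : ℝ)) + 1 with hE1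
  have hE1pos : 0 < E1 := by
    have : 0 ≤ ∑ ω, p ω * ((S ω).card : ℝ) :=
      Finset.sum_nonneg fun ω _ => mul_nonneg (hp ω) (by positivity)
    rw [hE1]; linarith
  -- ∑ f A * x A ≤ E1
  have hfx : ∑ A ∈ F, f A * x A ≤ E1 := by
    have h1 : ∀ A ∈ F, f A * x A
        = ∑ ω, (if S ω \ {u} = A then p ω * x (S ω \ {u}) else 0) := by
      intro A _
      show (∑ ω, if S ω \ {u} = A then p ω else 0) * x A = _
      rw [Finset.sum_mul]
      refine Finset.sum_congr rfl fun ω _ => ?_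
      by_cases h : S ω \ {u} = A
      · simp [h]
      · simp [h]
    rw [Finset.sum_congr rfl h1, swap]
    have h2 : ∑ ω, p ω * x (S ω \ {u}) ≤ ∑ ω, p ω * (((S ω).card : ℝ) + 1) := by
      refine Finset.sum_le_sum fun ω _ => ?_
      refine mul_le_mul_of_nonneg_left ?_ (hp ω)
      show ((S ω \ {u}).card : ℝ) + 1 ≤ ((S ω).card : ℝ) + 1
      have : (S ω \ {u}).card ≤ (S ω).card := Finset.card_le_card Finset.sdiff_subset
      have := (Nat.cast_le (α := ℝ)).mpr this
      linarith
    have h3 : ∑ ω, p ω * (((S ω).card : ℝ) + 1) = E1 := by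
      simp_rw [mul_add, mul_one, Finset.sum_add_distrib, hsum]
      exact hE1.symm
    linarith
  -- Cauchy-Schwarz
  have hCS : (∑ A ∈ F, f A) ^ 2 ≤ (∑ A ∈ F, f A / x A) * ∑ A ∈ F, f A * x A := by
    refine Finset.sum_sq_le_sum_mul_sum_of_sq_eq_mul F
      (fun A _ => div_nonneg (hf0 A) (hx0 A).le)
      (fun A _ => mul_nonneg (hf0 A) (hx0 A).le)
      (fun A _ => ?_)
    have hxA := (hx0 A).ne'
    field_simp
  rw [hfsum] at hCS
  have hsumdiv0 : 0 ≤ ∑ A ∈ F, f A / x A :=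
    Finset.sum_nonneg fun A _ => div_nonneg (hf0 A) (hx0 A).le
  have key : 1 / E1 ≤ ∑ A ∈ F, f A / x A := by
    rw [div_le_iff₀ hE1pos]
    calc (1:ℝ) = 1 ^ 2 := by ring
      _ ≤ (∑ A ∈ F, f A / x A) * ∑ A ∈ F, f A * x A := hCS
      _ ≤ (∑ A ∈ F, f A / x A) * E1 := by
          exact mul_le_mul_of_nonneg_left hfx hsumdiv0
  rw [ge_iff_le, hLHS]
  calc q / E1 = q * (1 / E1) := by ring
    _ ≤ q * ∑ A ∈ F, f A / x A := mul_le_mul_of_nonneg_left key hq0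
end

section
/- Let S be a random subset of a finite set L and T a random subset of a finite set R. Suppose for a fixed pair (l, r) ∈ L × R, the events {l' ∈ S} for l' ≠ l and {r' ∈ T} for r' ≠ r are jointly independent of the event {(l, r) ∈ S × T}. Let s be chosen uniformly from S and t uniformly from T (independently, undefined if either set is empty). Then P[(l, r) = (s, t)] ≥ P[(l, r) ∈ S × T] / ((E[|S|] + 1)(E[|T|] + 1)). -/
open Finset

-- quadratic nonnegativity
lemma quadpos (c d s t : ℝ) (hc : 0 < c) (hd : 0 < d) (hu : 0 < c + s) (hv : 0 < d + t) :
    0 ≤ (c+s)*c*t^2 + (d+t)*d*s^2 + c*d*(s*t) := by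
  rcases le_or_gt t 0 with ht | ht
  · nlinarith [mul_nonneg hv.le (sq_nonneg (2*d*s + c*t)), mul_nonneg (mul_nonneg (sq_nonneg (c*t)) hd.le) (by linarith : (0:ℝ) ≤ 3*d - t), hd]
  · rcases le_or_gt s 0 with hs | hs
    · nlinarith [mul_nonneg hu.le (sq_nonneg (2*c*t + d*s)), mul_nonneg (mul_nonneg (sq_nonneg (d*s)) hc.le) (by linarith : (0:ℝ) ≤ 3*c - s), hc]
    · nlinarith [mul_pos (mul_pos hc hd) (mul_pos hs ht), mul_nonneg (mul_nonneg hu.le hc.le) (sq_nonneg t), mul_nonneg (mul_nonneg hv.le hd.le) (sq_nonneg s)]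

lemma amgm (u v c d : ℝ) (hu : 0 < u) (hv : 0 < v) (hc : 0 < c) (hd : 0 < d) :
    3*(u*v*c*d) ≤ c^2*d^2 + u^2*v*d + u*v^2*c := by
  have h := quadpos c d (u - c) (v - d) hc hd (by linarith) (by linarith)
  nlinarith [h]

lemma tangent (x y a b : ℝ) (hx : 0 ≤ x) (hy : 0 ≤ y) (ha : 0 ≤ a) (hb : 0 ≤ b) :
    1/((a+1)*(b+1)) - (x-a)/((a+1)^2*(b+1)) - (y-b)/((a+1)*(b+1)^2) ≤ 1/((x+1)*(y+1)) := by
  have hu : (0:ℝ) < x+1 := by linarith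
  have hv : (0:ℝ) < y+1 := by linarith
  have hc : (0:ℝ) < a+1 := by linarith
  have hd : (0:ℝ) < b+1 := by linarith
  have heq : 1/((a+1)*(b+1)) - (x-a)/((a+1)^2*(b+1)) - (y-b)/((a+1)*(b+1)^2)
      = (3*((a+1)*(b+1)) - (x+1)*(b+1) - (y+1)*(a+1))/((a+1)^2*(b+1)^2) := by
    field_simp
    ring
  rw [heq, div_le_div_iff₀ (by positivity) (by positivity)]
  nlinarith [amgm (x+1) (y+1) (a+1) (b+1) hu hv hc hd]

lemma exchange {Ω L R : Type*} [Fintype Ω] [Fintype L] [Fintype R]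
    [DecidableEq L] [DecidableEq R]
    (p : Ω → ℝ)
    (S : Ω → Finset L) (T : Ω → Finset R) (l : L) (r : R)
    (hindep : ∀ (A : Finset L) (B : Finset R), l ∉ A → r ∉ B →
      (∑ ω, if S ω \ {l} = A ∧ T ω \ {r} = B ∧ l ∈ S ω ∧ r ∈ T ω then p ω else 0) =
      (∑ ω, if S ω \ {l} = A ∧ T ω \ {r} = B then p ω else 0) *
        (∑ ω, if l ∈ S ω ∧ r ∈ T ω then p ω else 0))
    (F : Finset L → Finset R → ℝ) :
    (∑ ω, if l ∈ S ω ∧ r ∈ T ω then p ω * F (S ω \ {l}) (T ω \ {r}) else 0)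
    = (∑ ω, if l ∈ S ω ∧ r ∈ T ω then p ω else 0) *
        ∑ ω, p ω * F (S ω \ {l}) (T ω \ {r}) := by
  classical
  set q := ∑ ω, if l ∈ S ω ∧ r ∈ T ω then p ω else 0 with hq
  -- generic expansion over values of (S ω \ {l}, T ω \ {r})
  have single : ∀ (w : Ω → ℝ),
      (∑ ω, w ω * F (S ω \ {l}) (T ω \ {r}))
        = ∑ A : Finset L, ∑ B : Finset R, F A B *
            ∑ ω, (if S ω \ {l} = A ∧ T ω \ {r} = B then w ω else 0) := by
    intro w
    have h1 : ∀ ω, (∑ A : Finset L, ∑ B : Finset R,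
        if S ω \ {l} = A ∧ T ω \ {r} = B then w ω * F A B else 0)
        = w ω * F (S ω \ {l}) (T ω \ {r}) := by
      intro ω
      simp [ite_and, Finset.sum_ite_eq]
    calc (∑ ω, w ω * F (S ω \ {l}) (T ω \ {r}))
        = ∑ ω, ∑ A : Finset L, ∑ B : Finset R,
            (if S ω \ {l} = A ∧ T ω \ {r} = B then w ω * F A B else 0) := by
          exact (Finset.sum_congr rfl fun ω _ => (h1 ω).symm)
      _ = ∑ A : Finset L, ∑ ω, ∑ B : Finset R,
            (if S ω \ {l} = A ∧ T ω \ {r} = B then w ω * F A B else 0) := Finset.sum_comm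
      _ = ∑ A : Finset L, ∑ B : Finset R, ∑ ω,
            (if S ω \ {l} = A ∧ T ω \ {r} = B then w ω * F A B else 0) := by
          exact Finset.sum_congr rfl fun A _ => Finset.sum_comm
      _ = ∑ A : Finset L, ∑ B : Finset R, F A B *
            ∑ ω, (if S ω \ {l} = A ∧ T ω \ {r} = B then w ω else 0) := by
          refine Finset.sum_congr rfl fun A _ => Finset.sum_congr rfl fun B _ => ?_
          rw [Finset.mul_sum]
          refine Finset.sum_congr rfl fun ω _ => ?_
          by_cases h : S ω \ {l} = A ∧ T ω \ {r} = B <;> simp [h, mul_comm]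
  have lhs1 : (∑ ω, if l ∈ S ω ∧ r ∈ T ω then p ω * F (S ω \ {l}) (T ω \ {r}) else 0)
      = ∑ ω, (if l ∈ S ω ∧ r ∈ T ω then p ω else 0) * F (S ω \ {l}) (T ω \ {r}) := by
    refine Finset.sum_congr rfl fun ω _ => ?_
    by_cases h : l ∈ S ω ∧ r ∈ T ω <;> simp [h]
  rw [lhs1, single (fun ω => if l ∈ S ω ∧ r ∈ T ω then p ω else 0), single p]
  rw [Finset.mul_sum]
  refine Finset.sum_congr rfl fun A _ => ?_
  rw [Finset.mul_sum]
  refine Finset.sum_congr rfl fun B _ => ?_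
  have hcomb : (∑ ω, if S ω \ {l} = A ∧ T ω \ {r} = B then
        (if l ∈ S ω ∧ r ∈ T ω then p ω else 0) else 0)
      = ∑ ω, if S ω \ {l} = A ∧ T ω \ {r} = B ∧ l ∈ S ω ∧ r ∈ T ω then p ω else 0 := by
    refine Finset.sum_congr rfl fun ω _ => ?_
    by_cases h1 : S ω \ {l} = A ∧ T ω \ {r} = B <;>
      by_cases h2 : l ∈ S ω ∧ r ∈ T ω <;> simp [h1, h2] <;> tauto
  rw [hcomb]
  by_cases hA : l ∈ A
  · have hz : ∀ ω, ¬(S ω \ {l} = A ∧ T ω \ {r} = B ∧ l ∈ S ω ∧ r ∈ T ω) := by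
      rintro ω ⟨h1, -⟩
      exact absurd (h1 ▸ hA) (by simp)
    have hz2 : ∀ ω, ¬(S ω \ {l} = A ∧ T ω \ {r} = B) := by
      rintro ω ⟨h1, -⟩
      exact absurd (h1 ▸ hA) (by simp)
    simp only [hz, hz2, if_false, Finset.sum_const_zero, mul_zero]
  · by_cases hB : r ∈ B
    · have hz : ∀ ω, ¬(S ω \ {l} = A ∧ T ω \ {r} = B ∧ l ∈ S ω ∧ r ∈ T ω) := by
        rintro ω ⟨-, h1, -⟩
        exact absurd (h1 ▸ hB) (by simp)
      have hz2 : ∀ ω, ¬(S ω \ {l} = A ∧ T ω \ {r} = B) := by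
        rintro ω ⟨-, h1⟩
        exact absurd (h1 ▸ hB) (by simp)
      simp only [hz, hz2, if_false, Finset.sum_const_zero, mul_zero]
    · rw [hindep A B hA hB]
      ring


/-- Lemma 2 (paper): for random subsets `S ⊆ L`, `T ⊆ R` with the stated joint
independence, and `s`, `t` uniform samples from `S` and `T`,
`P[(l,r) = (s,t)] ≥ P[(l,r) ∈ S × T] / ((E[|S|]+1)(E[|T|]+1))`. -/
theorem stmt1 {Ω L R : Type*} [Fintype Ω] [Fintype L] [Fintype R]
    [DecidableEq L] [DecidableEq R]
    (p : Ω → ℝ) (hp : ∀ ω, 0 ≤ p ω) (hsum : ∑ ω, p ω = 1)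
    (S : Ω → Finset L) (T : Ω → Finset R) (l : L) (r : R)
    (hindep : ∀ (A : Finset L) (B : Finset R), l ∉ A → r ∉ B →
      (∑ ω, if S ω \ {l} = A ∧ T ω \ {r} = B ∧ l ∈ S ω ∧ r ∈ T ω then p ω else 0) =
      (∑ ω, if S ω \ {l} = A ∧ T ω \ {r} = B then p ω else 0) *
        (∑ ω, if l ∈ S ω ∧ r ∈ T ω then p ω else 0)) :
    (∑ ω, if l ∈ S ω ∧ r ∈ T ω then
        p ω / (((S ω).card : ℝ) * ((T ω).card : ℝ)) else 0) ≥
      (∑ ω, if l ∈ S ω ∧ r ∈ T ω then p ω else 0) /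
        (((∑ ω, p ω * ((S ω).card : ℝ)) + 1) * ((∑ ω, p ω * ((T ω).card : ℝ)) + 1)) := by
  classical
  set F : Finset L → Finset R → ℝ :=
    fun A B => 1/(((A.card:ℝ)+1) * ((B.card:ℝ)+1)) with hF
  set q := ∑ ω, if l ∈ S ω ∧ r ∈ T ω then p ω else 0 with hqdef
  set x : Ω → ℝ := fun ω => ((S ω \ {l}).card : ℝ) with hx
  set y : Ω → ℝ := fun ω => ((T ω \ {r}).card : ℝ) with hy
  set a := ∑ ω, p ω * x ω with ha
  set b := ∑ ω, p ω * y ω with hb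
  have hx0 : ∀ ω, 0 ≤ x ω := fun ω => Nat.cast_nonneg _
  have hy0 : ∀ ω, 0 ≤ y ω := fun ω => Nat.cast_nonneg _
  have ha0 : 0 ≤ a := Finset.sum_nonneg fun ω _ => mul_nonneg (hp ω) (hx0 ω)
  have hb0 : 0 ≤ b := Finset.sum_nonneg fun ω _ => mul_nonneg (hp ω) (hy0 ω)
  have hq0 : 0 ≤ q := Finset.sum_nonneg fun ω _ => by split_ifs; exacts [hp ω, le_rfl]
  -- Step 1: rewrite LHS
  have step1 : (∑ ω, if l ∈ S ω ∧ r ∈ T ω then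
        p ω / (((S ω).card : ℝ) * ((T ω).card : ℝ)) else 0)
      = ∑ ω, if l ∈ S ω ∧ r ∈ T ω then p ω * F (S ω \ {l}) (T ω \ {r}) else 0 := by
    refine Finset.sum_congr rfl fun ω _ => ?_
    by_cases h : l ∈ S ω ∧ r ∈ T ω
    · simp only [h, if_true]
      have h1 : ((S ω).card : ℝ) = x ω + 1 := by
        rw [hx]; simp only
        rw [Finset.sdiff_singleton_eq_erase, ← Finset.card_erase_add_one h.1]
        push_cast; ring
      have h2 : ((T ω).card : ℝ) = y ω + 1 := by
        rw [hy]; simp only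
        rw [Finset.sdiff_singleton_eq_erase, ← Finset.card_erase_add_one h.2]
        push_cast; ring
      rw [h1, h2, hF]
      simp only
      rw [div_eq_mul_one_div]
    · simp [h]
  rw [step1, exchange p S T l r hindep F]
  -- Step 3: Jensen via tangent
  set C1 := 1/((a+1)*(b+1)) with hC1
  set C2 := 1/((a+1)^2*(b+1)) with hC2
  set C3 := 1/((a+1)*(b+1)^2) with hC3
  have jensen : C1 ≤ ∑ ω, p ω * F (S ω \ {l}) (T ω \ {r}) := by
    have hlow : ∀ ω ∈ Finset.univ (α := Ω),
        p ω * (C1 - (x ω - a)*C2 - (y ω - b)*C3) ≤ p ω * F (S ω \ {l}) (T ω \ {r}) := by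
      intro ω _
      apply mul_le_mul_of_nonneg_left _ (hp ω)
      have := tangent (x ω) (y ω) a b (hx0 ω) (hy0 ω) ha0 hb0
      rw [hF]; simp only
      refine le_trans (le_of_eq ?_) this
      ring
    have hsumlow : (∑ ω, p ω * (C1 - (x ω - a)*C2 - (y ω - b)*C3)) = C1 := by
      have expand : ∀ ω, p ω * (C1 - (x ω - a)*C2 - (y ω - b)*C3)
          = p ω * C1 - (p ω * x ω) * C2 + p ω * (a * C2)
            - (p ω * y ω) * C3 + p ω * (b * C3) := fun ω => by ring
      simp only [expand]
      rw [Finset.sum_add_distrib, Finset.sum_sub_distrib, Finset.sum_add_distrib,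
        Finset.sum_sub_distrib, ← Finset.sum_mul, ← Finset.sum_mul, ← Finset.sum_mul,
        ← Finset.sum_mul, ← Finset.sum_mul, hsum, ← ha, ← hb]
      ring
    calc C1 = ∑ ω, p ω * (C1 - (x ω - a)*C2 - (y ω - b)*C3) := hsumlow.symm
      _ ≤ _ := Finset.sum_le_sum hlow
  -- Step 4: denominators
  set Es := ∑ ω, p ω * ((S ω).card : ℝ) with hEs
  set Et := ∑ ω, p ω * ((T ω).card : ℝ) with hEt
  have haEs : a ≤ Es := by
    refine Finset.sum_le_sum fun ω _ => mul_le_mul_of_nonneg_left ?_ (hp ω)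
    exact_mod_cast Nat.cast_le.mpr (Finset.card_le_card (Finset.sdiff_subset))
  have hbEt : b ≤ Et := by
    refine Finset.sum_le_sum fun ω _ => mul_le_mul_of_nonneg_left ?_ (hp ω)
    exact_mod_cast Nat.cast_le.mpr (Finset.card_le_card (Finset.sdiff_subset))
  have hEs0 : 0 ≤ Es := le_trans ha0 haEs
  have hEt0 : 0 ≤ Et := le_trans hb0 hbEt
  have hdenom : 1/((Es+1)*(Et+1)) ≤ C1 := by
    rw [hC1]
    apply one_div_le_one_div_of_le (by positivity)
    apply mul_le_mul (by linarith) (by linarith) (by linarith) (by linarith)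
  calc q / ((Es+1)*(Et+1)) = q * (1/((Es+1)*(Et+1))) := by rw [mul_one_div]
    _ ≤ q * C1 := mul_le_mul_of_nonneg_left hdenom hq0
    _ ≤ q * ∑ ω, p ω * F (S ω \ {l}) (T ω \ {r}) := mul_le_mul_of_nonneg_left jensen hq0
end

section
/- Let G̃ and H̃ be the graphs produced by the randomized hardness reduction with parameters N and α, determined by independent Bernoulli(α) variables X_{uivj} for (u,v) ∈ E_G and i,j ∈ [N]. For any fixed injective map φ : V_G × [N] → V_G × [k] × [N], the function VALUE(φ) = Σ_{((u,i),(v,j)) ∈ E_G̃} 1[(φ(u,i), φ(v,j)) ∈ E_H̃], viewed as a function of the variables X_{uivj}, is (k² + 1)-Lipschitz: flipping any single variable X_{uivj} changes VALUE(φ) by at most k² + 1. -/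
open Finset

/-- The value of a fixed injective map `φ` on the instance of the randomized
reduction determined by the Bernoulli configuration `X`. -/
noncomputable def valueQAP {V : Type*} [Fintype V] [DecidableEq V] {k N : ℕ}
    (E : Finset (V × V)) (π : V × V → Finset (Fin k × Fin k))
    (φ : V × Fin N → V × Fin k × Fin N)
    (X : (V × V) × Fin N × Fin N → Bool) : ℝ :=
  ∑ e ∈ E, ∑ i : Fin N, ∑ j : Fin N,
    (if X ((e.1, e.2), i, j) = true
        ∧ ((φ (e.1, i)).1, (φ (e.2, j)).1) ∈ E
        ∧ X (((φ (e.1, i)).1, (φ (e.2, j)).1), (φ (e.1, i)).2.2, (φ (e.2, j)).2.2) = true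
        ∧ ((φ (e.1, i)).2.1, (φ (e.2, j)).2.1) ∈ π ((φ (e.1, i)).1, (φ (e.2, j)).1)
      then (1 : ℝ) else 0)

/-- For any fixed injective map `φ`, the function `VALUE(φ)` of the Bernoulli
variables `X_{uivj}` is `(k² + 1)`-Lipschitz: flipping a single variable changes
the value by at most `k² + 1`. -/
theorem stmt18 {V : Type*} [Fintype V] [DecidableEq V] {k N : ℕ}
    (E : Finset (V × V)) (π : V × V → Finset (Fin k × Fin k))
    (φ : V × Fin N → V × Fin k × Fin N) (hφ : Function.Injective φ)
    (X Y : (V × V) × Fin N × Fin N → Bool)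
    (c : (V × V) × Fin N × Fin N)
    (hflip : ∀ c' ≠ c, X c' = Y c') :
    |valueQAP E π φ X - valueQAP E π φ Y| ≤ (k : ℝ) ^ 2 + 1 := by
  classical
  -- the inner query point
  set q : (V × V) × Fin N × Fin N → (V × V) × Fin N × Fin N :=
    fun p => (((φ (p.1.1, p.2.1)).1, (φ (p.1.2, p.2.2)).1),
      (φ (p.1.1, p.2.1)).2.2, (φ (p.1.2, p.2.2)).2.2) with hq
  set f : ((V × V) × Fin N × Fin N → Bool) → (V × V) × Fin N × Fin N → ℝ :=
    fun Z p =>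
      if Z p = true
          ∧ ((φ (p.1.1, p.2.1)).1, (φ (p.1.2, p.2.2)).1) ∈ E
          ∧ Z (q p) = true
          ∧ ((φ (p.1.1, p.2.1)).2.1, (φ (p.1.2, p.2.2)).2.1)
              ∈ π ((φ (p.1.1, p.2.1)).1, (φ (p.1.2, p.2.2)).1)
        then (1 : ℝ) else 0 with hf
  set T : Finset ((V × V) × Fin N × Fin N) :=
    E ×ˢ (Finset.univ : Finset (Fin N × Fin N)) with hT
  have key : ∀ Z, valueQAP E π φ Z = ∑ p ∈ T, f Z p := by
    intro Z
    rw [valueQAP, hT, Finset.sum_product]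
    refine Finset.sum_congr rfl fun e _ => ?_
    rw [Fintype.sum_prod_type]
  rw [key X, key Y, ← Finset.sum_sub_distrib]
  have habs : ∀ p ∈ T, |f X p - f Y p| ≤ if p = c ∨ q p = c then (1 : ℝ) else 0 := by
    intro p _
    by_cases hp : p = c ∨ q p = c
    · simp only [hp, if_pos]
      have h1 : ∀ Z : ((V × V) × Fin N × Fin N → Bool), f Z p ∈ Set.Icc (0:ℝ) 1 := by
        intro Z; rw [hf]; dsimp only; split <;> simp
      have hX := h1 X; have hY := h1 Y
      rw [abs_sub_le_iff]
      constructor <;> linarith [hX.1, hX.2, hY.1, hY.2]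
    · push_neg at hp
      have e1 : X p = Y p := hflip p hp.1
      have e2 : X (q p) = Y (q p) := hflip (q p) hp.2
      rw [hf]; dsimp only
      rw [e1, e2]
      simp [hp]
  calc |∑ p ∈ T, (f X p - f Y p)| ≤ ∑ p ∈ T, |f X p - f Y p| :=
        Finset.abs_sum_le_sum_abs _ _
    _ ≤ ∑ p ∈ T, (if p = c ∨ q p = c then (1 : ℝ) else 0) :=
        Finset.sum_le_sum habs
    _ = (T.filter (fun p => p = c ∨ q p = c)).card := by
        rw [Finset.sum_boole]
    _ ≤ ((T.filter (fun p => p = c)).card : ℝ)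
        + ((T.filter (fun p => q p = c)).card : ℝ) := by
        have : T.filter (fun p => p = c ∨ q p = c)
            ⊆ T.filter (fun p => p = c) ∪ T.filter (fun p => q p = c) := by
          intro p hp
          simp only [Finset.mem_filter, Finset.mem_union] at hp ⊢
          tauto
        have h2 := Finset.card_le_card this
        have h3 := Finset.card_union_le (T.filter (fun p => p = c))
          (T.filter (fun p => q p = c))
        
        exact_mod_cast le_trans (Nat.cast_le.mpr h2) (by exact_mod_cast h3)
    _ ≤ (1 : ℝ) + (k : ℝ) ^ 2 := by
        gcongr
        · have : (T.filter (fun p => p = c)).card ≤ 1 := by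
            apply Finset.card_le_one.mpr
            intro a ha b hb
            simp only [Finset.mem_filter] at ha hb
            rw [ha.2, hb.2]
          exact_mod_cast this
        · have hcard : (T.filter (fun p => q p = c)).card ≤ k ^ 2 := by
            have := Finset.card_le_card_of_injOn
              (f := fun p => ((φ (p.1.1, p.2.1)).2.1, (φ (p.1.2, p.2.2)).2.1))
              (s := T.filter (fun p => q p = c))
              (t := (Finset.univ : Finset (Fin k × Fin k)))
              (fun _ _ => Finset.mem_univ _) ?_
            · simpa [sq] using this
            · intro a ha b hb hab
              dsimp only at hab
              simp only [Finset.coe_filter, Set.mem_setOf_eq] at ha hb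
              rw [hq] at ha hb
              have ha' := ha.2; have hb' := hb.2
              have hA1 : φ (a.1.1, a.2.1) = φ (b.1.1, b.2.1) := by
                have e1 : (φ (a.1.1, a.2.1)).1 = (φ (b.1.1, b.2.1)).1 := by
                  have := congrArg (fun x => x.1.1) ha'
                  have := congrArg (fun x => x.1.1) hb'
                  simp_all
                have e2 : (φ (a.1.1, a.2.1)).2.2 = (φ (b.1.1, b.2.1)).2.2 := by
                  have := congrArg (fun x => x.2.1) ha'
                  have := congrArg (fun x => x.2.1) hb'
                  simp_all
                have e3 : (φ (a.1.1, a.2.1)).2.1 = (φ (b.1.1, b.2.1)).2.1 :=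
                  (Prod.ext_iff.mp hab).1
                exact Prod.ext e1 (Prod.ext e3 e2)
              have hA2 : φ (a.1.2, a.2.2) = φ (b.1.2, b.2.2) := by
                have e1 : (φ (a.1.2, a.2.2)).1 = (φ (b.1.2, b.2.2)).1 := by
                  have := congrArg (fun x => x.1.2) ha'
                  have := congrArg (fun x => x.1.2) hb'
                  simp_all
                have e2 : (φ (a.1.2, a.2.2)).2.2 = (φ (b.1.2, b.2.2)).2.2 := by
                  have := congrArg (fun x => x.2.2) ha'
                  have := congrArg (fun x => x.2.2) hb'
                  simp_all
                have e3 : (φ (a.1.2, a.2.2)).2.1 = (φ (b.1.2, b.2.2)).2.1 :=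
                  (Prod.ext_iff.mp hab).2
                exact Prod.ext e1 (Prod.ext e3 e2)
              have h1 := hφ hA1
              have h2 := hφ hA2
              have h11 := congrArg Prod.fst h1
              have h12 := congrArg Prod.snd h1
              have h21 := congrArg Prod.fst h2
              have h22 := congrArg Prod.snd h2
              exact Prod.ext (Prod.ext h11 h21) (Prod.ext h12 h22)
          exact_mod_cast hcard
    _ = (k : ℝ) ^ 2 + 1 := by ring
end
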